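/- Let M ≥ 2, K ≥ 1, strictly positive weights w : Fin K → ℝ with ∑_k w_k = 1, quality vectors q^(k) : Fin M → ℝ, γ ≥ 0, λ > 0, and let (μ^{*(1)}, …, μ^{*(K)}) be the unique minimizer in the interior of Δ_M^K of the multi-type Rosenthal potential Ψ(μ^(1),…,μ^(K)) = (γ/2)∑_i f_i² − ∑_k w_k ∑_i q_i^(k) μ_i^(k) + λ ∑_k w_k ∑_i μ_i^(k) log μ_i^(k), where f_i = ∑_k w_k μ_i^(k). Then with f*_i = ∑_k w_k μ_i^{*(k)}, for each type k and each expert i one has μ_i^{*(k)} = exp((q_i^(k) − γ f*_i)/λ) / ∑_j exp((q_j^(k) − γ f*_j)/λ). -/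

import Mathlib

private lemma stepA
    (M K : ℕ)
    (w : Fin K → ℝ) (hw : ∀ k, 0 < w k)
    (q : Fin K → Fin M → ℝ) (γ : ℝ) (lam : ℝ) (hlam : 0 < lam)
    (μstar : Fin K → Fin M → ℝ)
    (hpos : ∀ k i, 0 < μstar k i) (hsum : ∀ k, ∑ i, μstar k i = 1)
    (hmin : ∀ ν : Fin K → Fin M → ℝ,
      (∀ k, (∀ i, 0 ≤ ν k i) ∧ ∑ i, ν k i = 1) →
      ((γ / 2) * ∑ i, (∑ k, w k * μstar k i) ^ 2
        - ∑ k, w k * ∑ i, q k i * μstar k i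
        + lam * ∑ k, w k * ∑ i, μstar k i * Real.log (μstar k i)) ≤
      ((γ / 2) * ∑ i, (∑ k, w k * ν k i) ^ 2
        - ∑ k, w k * ∑ i, q k i * ν k i
        + lam * ∑ k, w k * ∑ i, ν k i * Real.log (ν k i)))
    (k : Fin K) (i j : Fin M) :
    q k i - γ * (∑ k', w k' * μstar k' i) - lam * Real.log (μstar k i)
      = q k j - γ * (∑ k', w k' * μstar k' j) - lam * Real.log (μstar k j) := by
  by_cases hij : i = j
  · subst hij; rfl
  set d : Fin M → ℝ := fun i' => (if i' = i then (1:ℝ) else 0) - (if i' = j then 1 else 0)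
    with hd
  have hdi : d i = 1 := by simp [hd, hij]
  have hji : ¬ j = i := fun h => hij h.symm
  have hdj : d j = -1 := by simp [hd, hji]
  have hdsum : ∑ i', d i' = 0 := by
    simp [hd, Finset.sum_sub_distrib, Finset.sum_ite_eq']
  have hsum_d : ∀ g : Fin M → ℝ, ∑ i', g i' * d i' = g i - g j := by
    intro g
    simp [hd, mul_sub, Finset.sum_sub_distrib, mul_ite, mul_one, mul_zero,
      Finset.sum_ite_eq']
  set ν : ℝ → Fin K → Fin M → ℝ :=
    fun t k' i' => μstar k' i' + (if k' = k then t * d i' else 0) with hν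
  have hν0 : ∀ k' i', ν 0 k' i' = μstar k' i' := by intro k' i'; simp [hν]
  -- derivative of the aggregate load at each expert
  have hgd : ∀ i', HasDerivAt (fun t => ∑ k', w k' * ν t k' i') (w k * d i') 0 := by
    intro i'
    have h := HasDerivAt.fun_sum (x := (0:ℝ)) (u := Finset.univ)
      (A := fun k' t => w k' * ν t k' i')
      (A' := fun k' => if k' = k then w k' * d i' else 0) ?_
    · refine h.congr_deriv ?_
      simp [Finset.sum_ite_eq']
    · intro k' _
      by_cases hk' : k' = k
      · subst hk'
        simp only [hν, if_pos rfl]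
        simpa using (((hasDerivAt_id (0:ℝ)).mul_const (d i')).const_add
          (μstar k' i')).const_mul (w k')
      · simp only [hν, if_neg hk', add_zero]
        exact hasDerivAt_const _ _
  have hsq : HasDerivAt (fun t => (γ/2) * ∑ i', (∑ k', w k' * ν t k' i')^2)
      ((γ/2) * ∑ i', (2 * (∑ k', w k' * μstar k' i') * (w k * d i'))) 0 := by
    refine HasDerivAt.const_mul _ (HasDerivAt.fun_sum fun i' _ => ?_)
    have h := (hgd i').pow 2
    refine h.congr_deriv ?_
    simp [hν0]
  have hlin : HasDerivAt (fun t => ∑ k', w k' * ∑ i', q k' i' * ν t k' i')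
      (w k * ∑ i', q k i' * d i') 0 := by
    have hinner : ∀ k', HasDerivAt (fun t => w k' * ∑ i', q k' i' * ν t k' i')
        (if k' = k then w k * ∑ i', q k i' * d i' else 0) 0 := by
      intro k'
      by_cases hk' : k' = k
      · subst hk'
        simp only [if_pos rfl]
        refine HasDerivAt.const_mul _ (HasDerivAt.fun_sum fun i' _ => ?_)
        simp only [hν, if_pos rfl]
        simpa [mul_assoc] using (((hasDerivAt_id (0:ℝ)).mul_const (d i')).const_add
          (μstar k' i')).const_mul (q k' i')
      · simp only [if_neg hk']
        have : (fun t : ℝ => w k' * ∑ i', q k' i' * ν t k' i')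
            = fun _ => w k' * ∑ i', q k' i' * μstar k' i' := by
          funext t; simp [hν, hk']
        rw [this]; exact hasDerivAt_const _ _
    have h := HasDerivAt.fun_sum (u := Finset.univ) fun k' _ => hinner k'
    refine h.congr_deriv ?_
    simp [Finset.sum_ite_eq']
  have hent : HasDerivAt
      (fun t => lam * ∑ k', w k' * ∑ i', ν t k' i' * Real.log (ν t k' i'))
      (lam * (w k * ∑ i', (Real.log (μstar k i') + 1) * d i')) 0 := by
    refine HasDerivAt.const_mul _ ?_
    have hinner : ∀ k', HasDerivAt (fun t => w k' * ∑ i', ν t k' i' * Real.log (ν t k' i'))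
        (if k' = k then w k * ∑ i', (Real.log (μstar k i') + 1) * d i' else 0) 0 := by
      intro k'
      by_cases hk' : k' = k
      · subst hk'
        simp only [if_pos rfl]
        refine HasDerivAt.const_mul _ (HasDerivAt.fun_sum fun i' _ => ?_)
        have hu : HasDerivAt (fun t : ℝ => μstar k' i' + t * d i') (d i') 0 := by
          simpa using ((hasDerivAt_id (0:ℝ)).mul_const (d i')).const_add (μstar k' i')
        have hg : HasDerivAt (fun x : ℝ => x * Real.log x)
            (Real.log (μstar k' i') + 1) ((fun t : ℝ => μstar k' i' + t * d i') 0) := by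
          simpa using Real.hasDerivAt_mul_log (hpos k' i').ne'
        have hcomp := hg.comp 0 hu
        have heq : (fun t : ℝ => ν t k' i' * Real.log (ν t k' i'))
            = (fun x : ℝ => x * Real.log x) ∘ (fun t => μstar k' i' + t * d i') := by
          funext t; simp [hν]
        rw [heq]; exact hcomp
      · simp only [if_neg hk']
        have : (fun t : ℝ => w k' * ∑ i', ν t k' i' * Real.log (ν t k' i'))
            = fun _ => w k' * ∑ i', μstar k' i' * Real.log (μstar k' i') := by
          funext t; simp [hν, hk']
        rw [this]; exact hasDerivAt_const _ _
    have h := HasDerivAt.fun_sum (u := Finset.univ) fun k' _ => hinner k'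
    refine h.congr_deriv ?_
    simp [Finset.sum_ite_eq']
  have hφ : HasDerivAt (fun t => (γ/2) * ∑ i', (∑ k', w k' * ν t k' i')^2
      - ∑ k', w k' * ∑ i', q k' i' * ν t k' i'
      + lam * ∑ k', w k' * ∑ i', ν t k' i' * Real.log (ν t k' i'))
      ((γ/2) * ∑ i', (2 * (∑ k', w k' * μstar k' i') * (w k * d i'))
        - w k * ∑ i', q k i' * d i'
        + lam * (w k * ∑ i', (Real.log (μstar k i') + 1) * d i')) 0 :=
    (hsq.sub hlin).add hent
  have hε : 0 < min (μstar k i) (μstar k j) := lt_min (hpos k i) (hpos k j)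
  have hloc : IsLocalMin (fun t => (γ/2) * ∑ i', (∑ k', w k' * ν t k' i')^2
      - ∑ k', w k' * ∑ i', q k' i' * ν t k' i'
      + lam * ∑ k', w k' * ∑ i', ν t k' i' * Real.log (ν t k' i')) 0 := by
    filter_upwards [Metric.ball_mem_nhds (0:ℝ) hε] with t ht
    have ht' : |t| < min (μstar k i) (μstar k j) := by
      simpa [Real.dist_eq] using ht
    have hta := abs_lt.mp ht'
    have hfeas : ∀ k', (∀ i', 0 ≤ ν t k' i') ∧ ∑ i', ν t k' i' = 1 := by
      intro k'
      constructor
      · intro i'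
        by_cases hk' : k' = k
        · simp only [hν, if_pos hk']
          by_cases h1 : i' = i
          · rw [hk', h1, hdi]
            have h3 := min_le_left (μstar k i) (μstar k j)
            have h4 := hpos k i
            nlinarith [hta.1, hta.2]
          · by_cases h2 : i' = j
            · rw [hk', h2, hdj]
              have h3 := min_le_right (μstar k i) (μstar k j)
              have h4 := hpos k j
              nlinarith [hta.1, hta.2]
            · have h0 : d i' = 0 := by simp [hd, h1, h2]
              rw [h0]
              simpa using (hpos k' i').le
        · simp only [hν, if_neg hk', add_zero]
          exact (hpos k' i').le
      · by_cases hk' : k' = k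
        · simp only [hν, if_pos hk']
          rw [Finset.sum_add_distrib, hsum k', ← Finset.mul_sum, hdsum]
          ring
        · simp only [hν, if_neg hk', add_zero]
          exact hsum k'
    have h := hmin (ν t) hfeas
    simpa only [hν0] using h
  have hD := hloc.hasDerivAt_eq_zero hφ
  have e1 : ∑ i', (2 * (∑ k', w k' * μstar k' i') * (w k * d i'))
      = 2 * w k * ((∑ k', w k' * μstar k' i) - (∑ k', w k' * μstar k' j)) := by
    rw [show (∑ i', (2 * (∑ k', w k' * μstar k' i') * (w k * d i')))
        = ∑ i', (2 * w k * (∑ k', w k' * μstar k' i')) * d i'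
      from Finset.sum_congr rfl fun _ _ => by ring]
    rw [hsum_d]; ring
  have e2 : ∑ i', q k i' * d i' = q k i - q k j := hsum_d _
  have e3 : ∑ i', (Real.log (μstar k i') + 1) * d i'
      = (Real.log (μstar k i) + 1) - (Real.log (μstar k j) + 1) := hsum_d _
  rw [e1, e2, e3] at hD
  have hwk : w k ≠ 0 := (hw k).ne'
  have h2 : w k * (γ * ((∑ k', w k' * μstar k' i) - (∑ k', w k' * μstar k' j))
      - (q k i - q k j)
      + lam * (Real.log (μstar k i) - Real.log (μstar k j))) = 0 := by
    linear_combination hD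
  rcases mul_eq_zero.mp h2 with h | h
  · exact absurd h hwk
  · linarith

/-- The interior minimizer `μ*` of the multi-type Rosenthal potential
satisfies, for each type `k` and expert `i`, the softmax characterization
`μ*_i^(k) = exp((q_i^(k) − γ f*_i)/λ) / ∑_j exp((q_j^(k) − γ f*_j)/λ)`,
where `f*_i = ∑_k w_k μ*_i^(k)` is the aggregate load. -/
theorem multitype_minimizer_softmax_characterization
    (M K : ℕ) (hM : 2 ≤ M) (hK : 1 ≤ K)
    (w : Fin K → ℝ) (hw : ∀ k, 0 < w k) (hwsum : ∑ k, w k = 1)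
    (q : Fin K → Fin M → ℝ) (γ : ℝ) (hγ : 0 ≤ γ) (lam : ℝ) (hlam : 0 < lam)
    (μstar : Fin K → Fin M → ℝ)
    (hpos : ∀ k i, 0 < μstar k i) (hsum : ∀ k, ∑ i, μstar k i = 1)
    (hmin : ∀ ν : Fin K → Fin M → ℝ,
      (∀ k, (∀ i, 0 ≤ ν k i) ∧ ∑ i, ν k i = 1) →
      ((γ / 2) * ∑ i, (∑ k, w k * μstar k i) ^ 2
        - ∑ k, w k * ∑ i, q k i * μstar k i
        + lam * ∑ k, w k * ∑ i, μstar k i * Real.log (μstar k i)) ≤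
      ((γ / 2) * ∑ i, (∑ k, w k * ν k i) ^ 2
        - ∑ k, w k * ∑ i, q k i * ν k i
        + lam * ∑ k, w k * ∑ i, ν k i * Real.log (ν k i))) :
    ∀ k i, μstar k i =
      Real.exp ((q k i - γ * ∑ k', w k' * μstar k' i) / lam) /
        ∑ j, Real.exp ((q k j - γ * ∑ k', w k' * μstar k' j) / lam) := by
  intro k i
  set a : Fin M → ℝ := fun i' => (q k i' - γ * ∑ k', w k' * μstar k' i') / lam with ha
  have hlog : ∀ i', Real.log (μstar k i') = a i' + (Real.log (μstar k i) - a i) := by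
    intro i'
    have h := stepA M K w hw q γ lam hlam μstar hpos hsum hmin k i' i
    have hl : lam ≠ 0 := hlam.ne'
    simp only [ha]
    have h' : Real.log (μstar k i') - Real.log (μstar k i)
        = ((q k i' - γ * ∑ k', w k' * μstar k' i') - (q k i - γ * ∑ k', w k' * μstar k' i)) / lam := by
      rw [eq_div_iff hl]; linear_combination -h
    rw [sub_div] at h'
    linarith
  have hexp : ∀ i', μstar k i' = Real.exp (a i') * Real.exp (Real.log (μstar k i) - a i) := by
    intro i'
    rw [← Real.exp_add, ← hlog i', Real.exp_log (hpos k i')]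
  set Z : ℝ := ∑ j, Real.exp (a j) with hZ
  have hZpos : 0 < Z := by
    have : Nonempty (Fin M) := ⟨⟨0, by omega⟩⟩
    exact Finset.sum_pos (fun _ _ => Real.exp_pos _) Finset.univ_nonempty
  have hZc : Z * Real.exp (Real.log (μstar k i) - a i) = 1 := by
    rw [hZ, Finset.sum_mul]
    rw [show (∑ j, Real.exp (a j) * Real.exp (Real.log (μstar k i) - a i)) = ∑ j, μstar k j
      from Finset.sum_congr rfl fun j _ => (hexp j).symm]
    exact hsum k
  rw [show (Real.exp ((q k i - γ * ∑ k', w k' * μstar k' i) / lam) /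
        ∑ j, Real.exp ((q k j - γ * ∑ k', w k' * μstar k' j) / lam)) = Real.exp (a i) / Z
      from rfl]
  rw [eq_div_iff hZpos.ne', hexp i]
  linear_combination Real.exp (a i) * hZc
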